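/- Let m = 2^k with k ≥ 1. Then the set {±1}^m of all 2^m vectors of length m with entries ±1 can be partitioned into 2^m/m classes, each of size m, such that any two distinct vectors in the same class are orthogonal (i.e., each class forms the rows of a Hadamard matrix of order m). -/

import Mathlib

namespace PaleyAux

def e (k : ℕ) : (Fin k → ZMod 2) ≃ Fin (2 ^ k) := finFunctionFinEquiv

def sgn (t : ZMod 2) : ℤ := if t = 0 then 1 else -1

lemma sgn_add (s t : ZMod 2) : sgn (s + t) = sgn s * sgn t := by revert s t; decide
lemma sgn_add_one (s : ZMod 2) : sgn (s + 1) = -sgn s := by revert s; decide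
lemma sgn_mul_self (s : ZMod 2) : sgn s * sgn s = 1 := by revert s; decide
lemma z2_add_self (x : ZMod 2) : x + x = 0 := by revert x; decide
lemma z2_ne_zero {x : ZMod 2} (h : x ≠ 0) : x = 1 := by revert x; decide

variable (k : ℕ)

def chr (a : Fin k → ZMod 2) : (Fin (2 ^ k) → ZMod 2) :=
  fun i => ∑ j, a j * (e k).symm i j

def base (j : Fin k) : Fin (2 ^ k) := e k (fun j' => if j' = j then 1 else 0)

lemma chr_base (a : Fin k → ZMod 2) (j : Fin k) : chr k a (base k j) = a j := by
  simp [chr, base, Equiv.symm_apply_apply, mul_ite]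

lemma chr_add (a b : Fin k → ZMod 2) (i : Fin (2 ^ k)) :
    chr k (a + b) i = chr k a i + chr k b i := by
  simp [chr, add_mul, Finset.sum_add_distrib]

lemma chr_zero (i : Fin (2 ^ k)) : chr k 0 i = 0 := by simp [chr]

def Aop (ε : Fin (2 ^ k) → ZMod 2) : Fin k → ZMod 2 := fun j => ε (base k j)

def proj (ε : Fin (2 ^ k) → ZMod 2) : Fin (2 ^ k) → ZMod 2 :=
  fun i => ε i + chr k (Aop k ε) i

lemma Aop_add_chr (ε : Fin (2 ^ k) → ZMod 2) (a : Fin k → ZMod 2) :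
    Aop k (fun i => ε i + chr k a i) = fun j => Aop k ε j + a j := by
  funext j; simp [Aop, chr_base]

lemma Aop_proj (ε : Fin (2 ^ k) → ZMod 2) : Aop k (proj k ε) = 0 := by
  funext j
  have := Aop_add_chr k ε (Aop k ε)
  have h : Aop k (proj k ε) j = Aop k ε j + Aop k ε j := by
    exact congrFun this j
  simp [h, z2_add_self]

lemma self_eq_proj_add (ε : Fin (2 ^ k) → ZMod 2) (i : Fin (2 ^ k)) :
    proj k ε i + chr k (Aop k ε) i = ε i := by
  simp [proj, add_assoc, z2_add_self]

lemma proj_add_chr (ε : Fin (2 ^ k) → ZMod 2) (a : Fin k → ZMod 2) :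
    proj k (fun i => ε i + chr k a i) = proj k ε := by
  funext i
  have hA := Aop_add_chr k ε a
  simp only [proj, hA]
  have : chr k (fun j => Aop k ε j + a j) i = chr k (Aop k ε) i + chr k a i := by
    exact chr_add k (Aop k ε) a i
  rw [this]
  abel_nf
  simp [z2_add_self, two_smul, add_comm, add_assoc, add_left_comm]

def T := {f : Fin (2 ^ k) → ZMod 2 // Aop k f = 0}

instance : Fintype (T k) := by unfold T; infer_instance
instance : DecidableEq (T k) := by unfold T; infer_instance

def Phi : (Fin (2 ^ k) → ZMod 2) ≃ T k × (Fin k → ZMod 2) where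
  toFun ε := (⟨proj k ε, Aop_proj k ε⟩, Aop k ε)
  invFun p := fun i => p.1.1 i + chr k p.2 i
  left_inv ε := funext fun i => self_eq_proj_add k ε i
  right_inv p := by
    obtain ⟨⟨f, hf⟩, a⟩ := p
    have hA : Aop k (fun i => f i + chr k a i) = a := by
      rw [Aop_add_chr]; funext j; simp [congrFun hf j]
    have hP : proj k (fun i => f i + chr k a i) = f := by
      rw [proj_add_chr]
      funext i
      have : Aop k f = 0 := hf
      simp [proj, this, chr_zero]
    refine Prod.ext ?_ ?_
    · exact Subtype.ext hP
    · exact hA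

lemma card_T : Fintype.card (T k) = 2 ^ (2 ^ k) / 2 ^ k := by
  have h := Fintype.card_congr (Phi k)
  rw [Fintype.card_prod] at h
  have h1 : Fintype.card (Fin (2 ^ k) → ZMod 2) = 2 ^ (2 ^ k) := by
    simp [Fintype.card_fun]
  have h2 : Fintype.card (Fin k → ZMod 2) = 2 ^ k := by
    simp [Fintype.card_fun]
  rw [h1, h2] at h
  have hpos : 0 < 2 ^ k := Nat.pow_pos (by norm_num)
  rw [h]
  exact (Nat.mul_div_cancel _ hpos).symm

noncomputable def fT : T k ≃ Fin (2 ^ (2 ^ k) / 2 ^ k) := Fintype.equivFinOfCardEq (card_T k)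

def S := {v : Fin (2 ^ k) → ℤ // ∀ i, v i = 1 ∨ v i = -1}

lemma sgn_cases (t : ZMod 2) : sgn t = 1 ∨ sgn t = -1 := by revert t; decide

def enc : S k ≃ (Fin (2 ^ k) → ZMod 2) where
  toFun v := fun i => if v.1 i = 1 then 0 else 1
  invFun η := ⟨fun i => sgn (η i), fun i => sgn_cases (η i)⟩
  left_inv v := by
    apply Subtype.ext
    funext i
    rcases v.2 i with h | h <;> simp [h, sgn]
  right_inv η := by
    funext i
    have : ∀ t : ZMod 2, (if sgn t = 1 then (0 : ZMod 2) else 1) = t := by decide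
    exact this (η i)

lemma key_sum (a : Fin k → ZMod 2) (ha : a ≠ 0) :
    ∑ i, sgn (chr k a i) = 0 := by
  obtain ⟨j0, hj0⟩ : ∃ j, a j ≠ 0 := by
    by_contra h
    push_neg at h
    exact ha (funext h)
  have haj : a j0 = 1 := z2_ne_zero hj0
  have hre : ∑ i, sgn (chr k a i) = ∑ x : Fin k → ZMod 2, sgn (∑ j, a j * x j) := by
    rw [← Equiv.sum_comp (e k) (fun i => sgn (chr k a i))]
    refine Finset.sum_congr rfl fun x _ => ?_
    simp [chr, Equiv.symm_apply_apply]
  set F : (Fin k → ZMod 2) → ℤ := fun x => sgn (∑ j, a j * x j) with hF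
  have hinv : Function.Involutive (fun x : Fin k → ZMod 2 =>
      Function.update x j0 (x j0 + 1)) := by
    intro x
    funext j
    by_cases hj : j = j0
    · subst hj
      simp [Function.update_self, add_assoc, z2_add_self]
    · simp [Function.update_of_ne hj]
  have hflip : ∀ x, F ((hinv.toPerm) x) = -F x := by
    intro x
    have hsum : ∑ j, a j * (Function.update x j0 (x j0 + 1)) j
        = (∑ j, a j * x j) + 1 := by
      rw [← Finset.add_sum_erase _ _ (Finset.mem_univ j0),
          ← Finset.add_sum_erase _ (fun j => a j * x j) (Finset.mem_univ j0)]
      have : ∀ j ∈ Finset.univ.erase j0,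
          a j * (Function.update x j0 (x j0 + 1)) j = a j * x j := by
        intro j hj
        rw [Function.update_of_ne (Finset.ne_of_mem_erase hj)]
      rw [Finset.sum_congr rfl this, Function.update_self, haj]
      ring
    show F (Function.update x j0 (x j0 + 1)) = -F x
    rw [hF]
    simp only [hsum]
    exact sgn_add_one _
  have h1 : ∑ x : Fin k → ZMod 2, F x = -∑ x : Fin k → ZMod 2, F x := by
    conv_lhs => rw [← Equiv.sum_comp hinv.toPerm F]
    rw [Finset.sum_congr rfl fun x _ => hflip x] 
    rw [Finset.sum_neg_distrib]
  rw [hre]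
  linarith

noncomputable def cmap : S k → Fin (2 ^ (2 ^ k) / 2 ^ k) := fun v => fT k (Phi k (enc k v)).1

lemma fiber_card (j : Fin (2 ^ (2 ^ k) / 2 ^ k)) :
    Nat.card {v : S k // cmap k v = j} = 2 ^ k := by
  set f := (fT k).symm j with hf
  have eqv : {v : S k // cmap k v = j} ≃ (Fin k → ZMod 2) :=
  { toFun := fun v => (Phi k (enc k v.1)).2
    invFun := fun a => ⟨(enc k).symm ((Phi k).symm (f, a)), by
      show fT k (Phi k (enc k ((enc k).symm ((Phi k).symm (f, a))))).1 = j
      rw [Equiv.apply_symm_apply, Equiv.apply_symm_apply]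
      simp [hf]⟩
    left_inv := fun v => by
      apply Subtype.ext
      have hv : (Phi k (enc k v.1)).1 = f := by
        rw [hf]
        exact (Equiv.eq_symm_apply _).mpr v.2
      show (enc k).symm ((Phi k).symm (f, (Phi k (enc k v.1)).2)) = v.1
      rw [← hv, Prod.mk.eta, Equiv.symm_apply_apply, Equiv.symm_apply_apply]
    right_inv := fun a => by simp }
  rw [Nat.card_congr eqv]
  simp [Nat.card_eq_fintype_card, Fintype.card_fun]

lemma orth (v w : S k) (hc : cmap k v = cmap k w) (hvw : v ≠ w) :
    ∑ i, v.1 i * w.1 i = 0 := by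
  have h1 : (Phi k (enc k v)).1 = (Phi k (enc k w)).1 := (fT k).injective hc
  have hproj : proj k (enc k v) = proj k (enc k w) := congrArg Subtype.val h1
  set a : Fin k → ZMod 2 := Aop k (enc k v) + Aop k (enc k w) with hadef
  have hw : ∀ i, enc k w i = enc k v i + chr k a i := by
    intro i
    have h2 := self_eq_proj_add k (enc k w) i
    have h3 : proj k (enc k v) i = enc k v i + chr k (Aop k (enc k v)) i := rfl
    rw [← h2, hproj.symm, h3, hadef, chr_add]
    ring
  have ha : a ≠ 0 := by
    intro h0
    apply hvw
    apply (enc k).injective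
    funext i
    rw [hw i, h0, chr_zero, add_zero]
  have hv1 : ∀ i, v.1 i = sgn (enc k v i) := by
    intro i
    have h4 := congrArg (fun u : S k => u.1 i) ((enc k).symm_apply_apply v)
    exact h4.symm
  have hw1 : ∀ i, w.1 i = sgn (enc k w i) := by
    intro i
    have h4 := congrArg (fun u : S k => u.1 i) ((enc k).symm_apply_apply w)
    exact h4.symm
  calc ∑ i, v.1 i * w.1 i = ∑ i, sgn (chr k a i) := by
        refine Finset.sum_congr rfl fun i _ => ?_
        rw [hv1 i, hw1 i, hw i, sgn_add, ← mul_assoc, sgn_mul_self, one_mul]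
    _ = 0 := key_sum k a ha

end PaleyAux

/-- Paley's partition theorem: for `m = 2^k` with `k ≥ 1`, the `2^m` vectors of length `m`
with entries `±1` can be partitioned into `2^m/m` classes, each of size `m`, such that any
two distinct vectors in the same class are orthogonal. -/
theorem paley_partition_hadamard (k : ℕ) (hk : 1 ≤ k) :
    ∃ c : {v : Fin (2 ^ k) → ℤ // ∀ i, v i = 1 ∨ v i = -1} → Fin (2 ^ (2 ^ k) / 2 ^ k),
      (∀ j, Nat.card {v : {v : Fin (2 ^ k) → ℤ // ∀ i, v i = 1 ∨ v i = -1} // c v = j}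
          = 2 ^ k) ∧
      (∀ v w : {v : Fin (2 ^ k) → ℤ // ∀ i, v i = 1 ∨ v i = -1},
        c v = c w → v ≠ w → ∑ i, v.1 i * w.1 i = 0) := by
  exact ⟨PaleyAux.cmap k, PaleyAux.fiber_card k, fun v w => PaleyAux.orth k v w⟩
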